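/- Let X and Y be metric spaces with dim_AN(X) ≤ m and dim_AN(Y) ≤ n, and equip X × Y with the sum metric d((x,y),(x',y')) = d_X(x,x') + d_Y(y,y'). Then dim_AN(X × Y) ≤ m + n. -/

import Mathlib

open Metric Set

/-- A family `U` of subsets of a metric space is `r`-disjoint: any two points belonging to
different members of the family are at distance at least `r`. -/
def RDisjoint {X : Type*} [MetricSpace X] (r : ℝ) (U : Set (Set X)) : Prop :=
  ∀ A ∈ U, ∀ B ∈ U, A ≠ B → ∀ a ∈ A, ∀ b ∈ B, r ≤ dist a b

/-- Every member of the family `U` has diameter at most `R`. -/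
def FamBounded {X : Type*} [MetricSpace X] (R : ℝ) (U : Set (Set X)) : Prop :=
  ∀ A ∈ U, ∀ a ∈ A, ∀ b ∈ A, dist a b ≤ R

/-- `D` is an `n`-dimensional control function for `X` (in the sense of `r`-disjoint
families): for every `r > 0` there is a cover of `X` by `n + 1` families of subsets,
each family `r`-disjoint and with members of diameter at most `D r`. -/
def IsDimControl (X : Type*) [MetricSpace X] (n : ℕ) (D : ℝ → ℝ) : Prop :=
  ∀ r > 0, ∃ U : Fin (n + 1) → Set (Set X),
    (∀ i, RDisjoint r (U i)) ∧ (∀ i, FamBounded (D r) (U i)) ∧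
    ∀ x : X, ∃ i, x ∈ ⋃₀ U i

/-- `dim_AN X ≤ n`: `X` admits an `n`-dimensional control function which is a dilation,
i.e. of the form `D r = c * r` for some constant `c > 0`. -/
def DimANLE (X : Type*) [MetricSpace X] (n : ℕ) : Prop :=
  ∃ c : ℝ, 0 < c ∧ IsDimControl X n (fun r => c * r)

/-- The sum metric on the product of two metric spaces. -/
noncomputable def sumMetric (X Y : Type*) [MetricSpace X] [MetricSpace Y] :
    MetricSpace (X × Y) where
  dist p q := dist p.1 q.1 + dist p.2 q.2
  dist_self p := by simp
  dist_comm p q := by simp [dist_comm]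
  dist_triangle p q s := by
    have h1 := dist_triangle p.1 q.1 s.1
    have h2 := dist_triangle p.2 q.2 s.2
    try dsimp only
    linarith
  eq_of_dist_eq_zero := by
    intro p q h
    try dsimp only at h
    have h1 : dist p.1 q.1 = 0 :=
      le_antisymm (by linarith [dist_nonneg (x := p.2) (y := q.2)]) dist_nonneg
    have h2 : dist p.2 q.2 = 0 := by linarith
    exact Prod.ext (dist_eq_zero.1 h1) (dist_eq_zero.1 h2)

namespace ProdAN

variable {X : Type*} [MetricSpace X]

/-- The "tier set" of a point `x` at level `t`: indexed members (color, set) of the cover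
that are within distance `t * r` of `x`. -/
def TSet {q : ℕ} (U : Fin q → Set (Set X)) (r : ℝ) (t : ℕ) (x : X) :
    Set (Fin q × Set X) :=
  { p | p.2 ∈ U p.1 ∧ p.2.Nonempty ∧ infDist x p.2 ≤ t * r }

lemma TSet_mono {q : ℕ} (U : Fin q → Set (Set X)) {r : ℝ} (hr : 0 ≤ r)
    {t t' : ℕ} (h : t ≤ t') (x : X) : TSet U r t x ⊆ TSet U r t' x := by
  rintro p ⟨h1, h2, h3⟩
  refine ⟨h1, h2, h3.trans ?_⟩
  have ht : (t : ℝ) ≤ t' := by exact_mod_cast h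
  exact mul_le_mul_of_nonneg_right ht hr

/-- Ostrand/Kolmogorov-type lemma: from an `m`-dimensional control of dilation type we get,
for every `k` and scale `r`, `k` families, each `r`-disjoint and `4k(c+1)r`-bounded, such
that every point belongs to the unions of at least `k - m` of the families. -/
lemma ostrand (m : ℕ) (c : ℝ) (H : IsDimControl X m (fun r => c * r))
    (k : ℕ) (hk : 1 ≤ k) (r : ℝ) (hr : 0 < r) :
    ∃ G : Fin k → Set (Set X),
      (∀ j, RDisjoint r (G j)) ∧
      (∀ j, FamBounded ((4 * (k : ℝ) * (c + 1)) * r) (G j)) ∧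
      (∀ x : X, ∃ S : Finset (Fin k), k ≤ m + S.card ∧ ∀ j ∈ S, x ∈ ⋃₀ G j) := by
  classical
  have hk' : (1 : ℝ) ≤ (k : ℝ) := by exact_mod_cast hk
  have hs : (0 : ℝ) < 4 * (k : ℝ) * r := by nlinarith
  obtain ⟨U, hdisj, hbdd, hcov⟩ := H (4 * (k : ℝ) * r) hs
  set T : ℕ → X → Set (Fin (m + 1) × Set X) := fun t x => TSet U r t x with hTdef
  -- key separation estimate
  have key : ∀ (a b : X) (t : ℕ),
      (∃ p, p ∈ T t a ∧ p ∉ T (t + 1) b) → r ≤ dist a b := by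
    rintro a b t ⟨p, ⟨hU1, hne1, hle1⟩, hnot⟩
    have h2 : ¬ infDist b p.2 ≤ ((t + 1 : ℕ) : ℝ) * r := fun h => hnot ⟨hU1, hne1, h⟩
    push_cast at h2
    have h2' : ((t : ℝ) + 1) * r < infDist b p.2 := not_le.mp h2
    have h3 : infDist b p.2 ≤ infDist a p.2 + dist b a := infDist_le_infDist_add_dist
    have h4 : dist a b = dist b a := dist_comm a b
    nlinarith
  refine ⟨fun j => { A | ∃ F, A = { y | T j.val y = F ∧ T (j.val + 1) y = F } },
    ?_, ?_, ?_⟩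
  · -- r-disjoint
    intro j A hA B hB hAB a ha b hb
    obtain ⟨F, rfl⟩ := hA
    obtain ⟨F', rfl⟩ := hB
    have hFF' : F ≠ F' := fun h => hAB (by rw [h])
    obtain ⟨ha1, ha2⟩ := ha
    obtain ⟨hb1, hb2⟩ := hb
    have hsub : ¬ F ⊆ F' ∨ ¬ F' ⊆ F := by
      by_contra h
      push_neg at h
      exact hFF' (h.1.antisymm h.2)
    rcases hsub with h | h
    · obtain ⟨p, hp1, hp2⟩ := Set.not_subset.mp h
      refine key a b j.val ⟨p, ?_, ?_⟩
      · rw [ha1]; exact hp1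
      · rw [hb2]; exact hp2
    · obtain ⟨p, hp1, hp2⟩ := Set.not_subset.mp h
      have := key b a j.val ⟨p, by rw [hb1]; exact hp1, by rw [ha2]; exact hp2⟩
      rwa [dist_comm] at this
  · -- bounded
    intro j A hA a ha b hb
    obtain ⟨F, rfl⟩ := hA
    obtain ⟨ha1, _⟩ := ha
    obtain ⟨hb1, _⟩ := hb
    obtain ⟨i0, A0, hA0U, haA0⟩ := hcov a
    have hp0a : ((i0, A0) : Fin (m + 1) × Set X) ∈ T j.val a := by
      refine ⟨hA0U, ⟨a, haA0⟩, ?_⟩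
      rw [infDist_zero_of_mem haA0]
      positivity
    have hp0b : ((i0, A0) : Fin (m + 1) × Set X) ∈ T j.val b := by
      rw [hb1, ← ha1]; exact hp0a
    have hD : infDist b A0 ≤ (j.val : ℝ) * r := hp0b.2.2
    have hjk : ((j.val : ℕ) : ℝ) ≤ (k : ℝ) := by exact_mod_cast j.isLt.le
    have hlt : infDist b A0 < (k : ℝ) * r + r := by nlinarith
    obtain ⟨b', hb'A0, hbb'⟩ := (infDist_lt_iff ⟨a, haA0⟩).mp hlt
    have h1 : dist a b' ≤ c * (4 * (k : ℝ) * r) := hbdd i0 A0 hA0U a haA0 b' hb'A0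
    have h2 : dist a b ≤ dist a b' + dist b' b := dist_triangle a b' b
    have h3 : dist b' b = dist b b' := dist_comm _ _
    nlinarith
  · -- multiplicity
    intro x
    have hinj : Set.InjOn Prod.fst (T k x) := by
      rintro p hp q hq hpq
      by_contra hne
      have h2ne : p.2 ≠ q.2 := fun h => hne (Prod.ext hpq h)
      obtain ⟨hU1, hne1, hle1⟩ := hp
      obtain ⟨hU2, hne2, hle2⟩ := hq
      have hq1 : q.2 ∈ U p.1 := by rw [hpq]; exact hU2
      have hlt1 : infDist x p.2 < (k : ℝ) * r + r := by nlinarith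
      have hlt2 : infDist x q.2 < (k : ℝ) * r + r := by nlinarith
      obtain ⟨a, haA, hxa⟩ := (infDist_lt_iff hne1).mp hlt1
      obtain ⟨b, hbB, hxb⟩ := (infDist_lt_iff hne2).mp hlt2
      have hd : 4 * (k : ℝ) * r ≤ dist a b := hdisj p.1 p.2 hU1 q.2 hq1 h2ne a haA b hbB
      have ht : dist a b ≤ dist a x + dist x b := dist_triangle a x b
      have hax : dist a x = dist x a := dist_comm _ _
      nlinarith
    have hfin : (T k x).Finite :=
      Set.Finite.of_finite_image (Set.toFinite _) hinj
    have hsub0k : T 0 x ⊆ T k x := TSet_mono U hr.le (Nat.zero_le k) x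
    have hfin0 : (T 0 x).Finite := hfin.subset hsub0k
    have hTkcard : hfin.toFinset.card ≤ m + 1 := by
      have hinj' : Set.InjOn Prod.fst (↑hfin.toFinset : Set (Fin (m + 1) × Set X)) := by
        intro p hp q hq h
        rw [Finset.mem_coe, Set.Finite.mem_toFinset] at hp hq
        exact hinj hp hq h
      have hle := Finset.card_le_card_of_injOn Prod.fst
        (fun (p : Fin (m + 1) × Set X) (_ : p ∈ hfin.toFinset) =>
          Finset.mem_univ (α := Fin (m + 1)) p.1) hinj'
      simpa using hle
    have hT0ne : (T 0 x).Nonempty := by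
      obtain ⟨i0, A0, hA0U, hxA0⟩ := hcov x
      exact ⟨(i0, A0), hA0U, ⟨x, hxA0⟩, by rw [infDist_zero_of_mem hxA0]; simp⟩
    have hT0card : 1 ≤ hfin0.toFinset.card := by
      obtain ⟨p, hp⟩ := hT0ne
      exact Finset.card_pos.mpr ⟨p, hfin0.mem_toFinset.mpr hp⟩
    have hsubF : hfin0.toFinset ⊆ hfin.toFinset := by
      intro p hp
      rw [Set.Finite.mem_toFinset] at *
      exact hsub0k hp
    have hdiffcard : (hfin.toFinset \ hfin0.toFinset).card ≤ m := by
      rw [Finset.card_sdiff_of_subset hsubF]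
      omega
    -- choosing witnesses for levels where the tier set grows
    have hdiffne : ∀ j : Fin k, T j.val x ≠ T (j.val + 1) x →
        ∃ p, p ∈ T (j.val + 1) x ∧ p ∉ T j.val x := by
      intro j hne
      by_contra h
      push_neg at h
      exact hne ((TSet_mono U hr.le (Nat.le_succ _) x).antisymm h)
    set f : Fin k → (Fin (m + 1) × Set X) := fun j =>
      if h : T j.val x ≠ T (j.val + 1) x then (hdiffne j h).choose
      else (⟨0, Nat.succ_pos m⟩, (∅ : Set X)) with hfdef
    have hfspec : ∀ j : Fin k, T j.val x ≠ T (j.val + 1) x →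
        f j ∈ T (j.val + 1) x ∧ f j ∉ T j.val x := by
      intro j h
      rw [hfdef]
      simp only [dif_pos h]
      exact (hdiffne j h).choose_spec
    set Bad : Finset (Fin k) :=
      Finset.univ.filter (fun j : Fin k => ¬ (T j.val x = T (j.val + 1) x)) with hBaddef
    set Good : Finset (Fin k) :=
      Finset.univ.filter (fun j : Fin k => T j.val x = T (j.val + 1) x) with hGooddef
    have hBadmem : ∀ j ∈ Bad, T j.val x ≠ T (j.val + 1) x := by
      intro j hj
      rw [hBaddef, Finset.mem_filter] at hj
      exact hj.2
    have hBadcard : Bad.card ≤ (hfin.toFinset \ hfin0.toFinset).card := by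
      apply Finset.card_le_card_of_injOn f
      · intro j hj
        have hne := hBadmem j hj
        obtain ⟨hp1, hp2⟩ := hfspec j hne
        rw [Finset.mem_coe, Finset.mem_sdiff, Set.Finite.mem_toFinset, Set.Finite.mem_toFinset]
        exact ⟨TSet_mono U hr.le j.isLt x hp1,
          fun h0 => hp2 (TSet_mono U hr.le (Nat.zero_le _) x h0)⟩
      · intro j hj j' hj' heq
        by_contra hnejj
        have haux : ∀ a b : Fin k, a ∈ Bad → b ∈ Bad → a.val < b.val → f a ≠ f b := by
          intro a b ha hb hab hfeq
          obtain ⟨s1a, _⟩ := hfspec a (hBadmem a ha)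
          obtain ⟨_, s2b⟩ := hfspec b (hBadmem b hb)
          have : f a ∈ T b.val x := TSet_mono U hr.le hab x s1a
          rw [hfeq] at this
          exact s2b this
        rw [Finset.mem_coe] at hj hj'
        rcases lt_or_gt_of_ne (fun h : j = j' => hnejj h) with h | h
        · exact haux j j' hj hj' h heq
        · exact haux j' j hj' hj h heq.symm
    have hsplit : Good.card + Bad.card = k := by
      rw [hGooddef, hBaddef]
      have := Finset.card_filter_add_card_filter_not
        (s := (Finset.univ : Finset (Fin k)))
        (p := fun j : Fin k => T j.val x = T (j.val + 1) x)
      simpa using this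
    refine ⟨Good, by omega, ?_⟩
    intro j hj
    rw [hGooddef, Finset.mem_filter] at hj
    refine ⟨{ y | T j.val y = T j.val x ∧ T (j.val + 1) y = T j.val x },
      ⟨T j.val x, rfl⟩, ⟨rfl, hj.2.symm⟩⟩

end ProdAN

/-- If `dim_AN X ≤ m` and `dim_AN Y ≤ n`, then the product `X × Y` with the sum metric
satisfies `dim_AN (X × Y) ≤ m + n`. -/
theorem stmt2 {X Y : Type*} [MetricSpace X] [MetricSpace Y] (m n : ℕ)
    (hX : DimANLE X m) (hY : DimANLE Y n) :
    @DimANLE (X × Y) (sumMetric X Y) (m + n) := by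
  classical
  obtain ⟨cX, hcX, HX⟩ := hX
  obtain ⟨cY, hcY, HY⟩ := hY
  letI : MetricSpace (X × Y) := sumMetric X Y
  have hkpos : (0 : ℝ) < ((m + n + 1 : ℕ) : ℝ) := by exact_mod_cast Nat.succ_pos (m + n)
  refine ⟨4 * ((m + n + 1 : ℕ) : ℝ) * (cX + 1) + 4 * ((m + n + 1 : ℕ) : ℝ) * (cY + 1),
    by nlinarith, ?_⟩
  intro r hr
  obtain ⟨GX, hXd, hXb, hXc⟩ := ProdAN.ostrand m cX HX (m + n + 1) (by omega) r hr
  obtain ⟨GY, hYd, hYb, hYc⟩ := ProdAN.ostrand n cY HY (m + n + 1) (by omega) r hr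
  refine ⟨fun i => { P | ∃ A ∈ GX i, ∃ B ∈ GY i, P = A ×ˢ B }, ?_, ?_, ?_⟩
  · intro i P hP Q hQ hne a ha b hb
    obtain ⟨A1, hA1, B1, hB1, rfl⟩ := hP
    obtain ⟨A2, hA2, B2, hB2, rfl⟩ := hQ
    show r ≤ dist a.1 b.1 + dist a.2 b.2
    by_cases hAA : A1 = A2
    · have hBB : B1 ≠ B2 := by
        intro h
        exact hne (by rw [hAA, h])
      have h1 := hYd i B1 hB1 B2 hB2 hBB a.2 ha.2 b.2 hb.2
      have h2 : (0 : ℝ) ≤ dist a.1 b.1 := dist_nonneg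
      linarith
    · have h1 := hXd i A1 hA1 A2 hA2 hAA a.1 ha.1 b.1 hb.1
      have h2 : (0 : ℝ) ≤ dist a.2 b.2 := dist_nonneg
      linarith
  · intro i P hP a ha b hb
    obtain ⟨A1, hA1, B1, hB1, rfl⟩ := hP
    show dist a.1 b.1 + dist a.2 b.2 ≤ (4 * ((m + n + 1 : ℕ) : ℝ) * (cX + 1)
          + 4 * ((m + n + 1 : ℕ) : ℝ) * (cY + 1)) * r
    have h1 := hXb i A1 hA1 a.1 ha.1 b.1 hb.1
    have h2 := hYb i B1 hB1 a.2 ha.2 b.2 hb.2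
    nlinarith [hr.le]
  · intro p
    obtain ⟨SX, hSXc, hSX⟩ := hXc p.1
    obtain ⟨SY, hSYc, hSY⟩ := hYc p.2
    have hunion : (SX ∪ SY).card ≤ m + n + 1 := by
      have := Finset.card_le_univ (SX ∪ SY)
      simpa using this
    have hint := Finset.card_union_add_card_inter SX SY
    have hpos : 0 < (SX ∩ SY).card := by omega
    obtain ⟨i, hi⟩ := Finset.card_pos.mp hpos
    obtain ⟨hiX, hiY⟩ := Finset.mem_inter.mp hi
    obtain ⟨A, hAU, hpA⟩ := hSX i hiX
    obtain ⟨B, hBU, hpB⟩ := hSY i hiY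
    exact ⟨i, A ×ˢ B, ⟨A, hAU, B, hBU, rfl⟩, hpA, hpB⟩
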